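/- Let m ≥ 1 and let A, B, C be m×m matrices over F₂ such that the digital net generated by (A, B, C) is a (0,m,3)-net over F₂. Let a_i, b_i, c_i denote the i-th rows of A, B, C respectively, and for integers i, j ≥ 0 with i+j ≤ m−1 let V_{i,j} be the F₂-subspace of F₂^m spanned by a_1,…,a_i, b_1,…,b_{m−i−j−1}, c_1,…,c_j. Then for all integers 1 ≤ k ≤ m−j and 0 ≤ i_1 < i_2 < … < i_k ≤ m−1−j, the subspace ⋂_{l=1}^k V_{i_l, j} has dimension m−k over F₂. -/

import Mathlib

open Matrix

/-- The vector of binary digits of `l` (least significant first). -/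
def digitsVec (m l : ℕ) : Fin m → ZMod 2 := fun k => if l.testBit k.val then 1 else 0

/-- The map φ sending a bit vector to a real number in [0,1). -/
noncomputable def phiMap (m : ℕ) (y : Fin m → ZMod 2) : ℝ :=
  ∑ k : Fin m, ((y k).val : ℝ) / 2 ^ (k.val + 1)

/-- The digital net (as a multiset of `2^m` points in `[0,1)^s`) generated by
matrices `C 0, …, C (s-1)`. -/
noncomputable def digitalNet (m s : ℕ) (C : Fin s → Matrix (Fin m) (Fin m) (ZMod 2)) :
    Multiset (Fin s → ℝ) :=
  (Multiset.range (2 ^ m)).map fun l => fun j => phiMap m ((C j).mulVec (digitsVec m l))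

open Classical in
/-- `P` is a `(t,m,s)`-net over `F₂`: every elementary interval of volume `2^{t-m}`
contains exactly `2^t` points of `P`, counted with multiplicity. -/
def IsNet (t m s : ℕ) (P : Multiset (Fin s → ℝ)) : Prop :=
  ∀ d : Fin s → ℕ, (∑ i, d i) = m - t →
    ∀ a : Fin s → ℕ, (∀ i, a i < 2 ^ d i) →
      (P.countP fun x => ∀ i,
        ((a i : ℝ) / 2 ^ d i ≤ x i ∧ x i < ((a i : ℝ) + 1) / 2 ^ d i)) = 2 ^ t

/-- The anti-diagonal matrix `J_m` over `F₂`. -/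
def Jmat (m : ℕ) : Matrix (Fin m) (Fin m) (ZMod 2) :=
  Matrix.of fun i j => if i.val + j.val = m - 1 then 1 else 0

/-- The upper-triangular Pascal matrix `P_m` over `F₂` (0-indexed entry `(i,j)` is
`binom(j,i) mod 2`). -/
def Pmat (m : ℕ) : Matrix (Fin m) (Fin m) (ZMod 2) :=
  Matrix.of fun i j => ((j.val.choose i.val : ℕ) : ZMod 2)

/-- A matrix is lower triangular. -/
def IsLowerTri {m : ℕ} (L : Matrix (Fin m) (Fin m) (ZMod 2)) : Prop :=
  ∀ i j : Fin m, i < j → L i j = 0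

/-- The set consisting of the first `n` rows of `M`. -/
def rowSet {m : ℕ} (M : Matrix (Fin m) (Fin m) (ZMod 2)) (n : ℕ) :
    Set (Fin m → ZMod 2) :=
  {x | ∃ r : Fin m, r.val < n ∧ x = M r}

/-- The subspace `V_{i,j}` spanned by the first `i` rows of `A`, the first
`m−i−j−1` rows of `B` and the first `j` rows of `C`. -/
def Vsub {m : ℕ} (A B C : Matrix (Fin m) (Fin m) (ZMod 2)) (i j : ℕ) :
    Submodule (ZMod 2) (Fin m → ZMod 2) :=
  Submodule.span (ZMod 2) (rowSet A i ∪ rowSet B (m - i - j - 1) ∪ rowSet C j)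

section Aux

variable {m : ℕ}

lemma phi_nonneg (y : Fin m → ZMod 2) : 0 ≤ phiMap m y := by
  apply Finset.sum_nonneg; intro k _; positivity

lemma geom_aux (d : ℕ) : ∀ M, d ≤ M →
    ∑ k ∈ Finset.Ico d M, ((1:ℝ)/2)^(k+1) = (1/2)^d - (1/2)^M := by
  intro M
  induction M with
  | zero => intro h; interval_cases d; simp
  | succ M ih =>
    intro h
    rcases Nat.lt_or_ge d (M+1) with h' | h'
    · have hdM : d ≤ M := by omega
      rw [Finset.sum_Ico_succ_top hdM, ih hdM]; ring
    · have : d = M + 1 := by omega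
      subst this; simp

lemma phi_lt (y : Fin m → ZMod 2) (d : ℕ) (h : ∀ t : Fin m, t.val < d → y t = 0) :
    phiMap m y < 1 / 2 ^ d := by
  have hb : phiMap m y ≤ ∑ k ∈ Finset.Ico d m, ((1:ℝ)/2)^(k+1) := by
    have h1 : phiMap m y ≤ ∑ k : Fin m, (if d ≤ k.val then ((1:ℝ)/2)^(k.val+1) else 0) := by
      apply Finset.sum_le_sum
      intro k _
      rcases Nat.lt_or_ge k.val d with hk | hk
      · rw [h k hk, if_neg (by omega)]; simp
      · rw [if_pos hk]
        have : ((y k).val : ℝ) ≤ 1 := by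
          have := (y k).val_lt
          have : (y k).val ≤ 1 := by omega
          exact_mod_cast this
        rw [div_pow, one_pow]
        exact div_le_div_of_nonneg_right this (by positivity)
    have h2 : ∑ k : Fin m, (if d ≤ k.val then ((1:ℝ)/2)^(k.val+1) else 0)
        = ∑ k ∈ Finset.Ico d m, ((1:ℝ)/2)^(k+1) := by
      rw [Fin.sum_univ_eq_sum_range (fun k => if d ≤ k then ((1:ℝ)/2)^(k+1) else 0) m,
        ← Finset.sum_filter]
      apply Finset.sum_congr _ (fun _ _ => rfl)
      ext k
      simp only [Finset.mem_filter, Finset.mem_range, Finset.mem_Ico]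
      omega
    linarith
  have hlt : ∑ k ∈ Finset.Ico d m, ((1:ℝ)/2)^(k+1) < (1/2)^d := by
    rcases le_or_gt d m with hdm | hdm
    · rw [geom_aux d m hdm]
      have : (0:ℝ) < (1/2)^m := by positivity
      linarith
    · rw [Finset.Ico_eq_empty (by omega), Finset.sum_empty]
      positivity
  calc phiMap m y ≤ _ := hb
    _ < (1/2)^d := hlt
    _ = 1 / 2^d := by rw [div_pow, one_pow]

end Aux

lemma digitsVec_inj {l l' : ℕ} (hl : l < 2^m) (hl' : l' < 2^m)
    (h : digitsVec m l = digitsVec m l') : l = l' := by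
  apply Nat.eq_of_testBit_eq
  intro k
  rcases Nat.lt_or_ge k m with hk | hk
  · have := congrFun h ⟨k, hk⟩
    simp only [digitsVec] at this
    by_cases h1 : l.testBit k <;> by_cases h2 : l'.testBit k <;> simp_all
  · rw [Nat.testBit_eq_false_of_lt (lt_of_lt_of_le hl (Nat.pow_le_pow_right (by norm_num) hk)),
      Nat.testBit_eq_false_of_lt (lt_of_lt_of_le hl' (Nat.pow_le_pow_right (by norm_num) hk))]

lemma digitsVec_surj (v : Fin m → ZMod 2) : ∃ l < 2^m, digitsVec m l = v := by
  have hinj : Function.Injective (fun l : Fin (2^m) => digitsVec m l.val) := by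
    intro l l' h
    exact Fin.ext (digitsVec_inj l.isLt l'.isLt h)
  have hbij : Function.Bijective (fun l : Fin (2^m) => digitsVec m l.val) :=
    (Fintype.bijective_iff_injective_and_card _).2 ⟨hinj, by simp [ZMod.card]⟩
  obtain ⟨l, hl⟩ := hbij.2 v
  exact ⟨l.val, l.isLt, hl⟩

lemma countP_ge_two (N : ℕ) (p : ℕ → Prop) [DecidablePred p] {a b : ℕ} (hab : a ≠ b)
    (ha : a < N) (hb : b < N) (hpa : p a) (hpb : p b) :
    2 ≤ Multiset.countP p (Multiset.range N) := by
  have hle : ({a, b} : Multiset ℕ) ≤ Multiset.range N := by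
    rw [Multiset.le_iff_count]
    intro x
    rcases eq_or_ne x a with rfl | hxa
    · have h1 : Multiset.count x (Multiset.range N) = 1 :=
        Multiset.count_eq_one_of_mem (Multiset.nodup_range N) (Multiset.mem_range.2 ha)
      simp [Multiset.count_cons, hab, h1]
    · rcases eq_or_ne x b with rfl | hxb
      · have h1 : Multiset.count x (Multiset.range N) = 1 :=
          Multiset.count_eq_one_of_mem (Multiset.nodup_range N) (Multiset.mem_range.2 hb)
        simp [Multiset.count_cons, hab.symm, h1]
      · simp [Multiset.count_cons, hxa, hxb]
  have h2 : Multiset.countP p ({a, b} : Multiset ℕ) = 2 := by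
    rw [show ({a, b} : Multiset ℕ) = a ::ₘ b ::ₘ 0 from rfl, Multiset.countP_cons,
      Multiset.countP_cons, Multiset.countP_zero, if_pos hpa, if_pos hpb]
  calc (2:ℕ) = Multiset.countP p ({a, b} : Multiset ℕ) := h2.symm
    _ ≤ _ := Multiset.countP_le_of_le p hle

lemma net_inj (A B C : Matrix (Fin m) (Fin m) (ZMod 2))
    (hnet : IsNet 0 m 3 (digitalNet m 3 ![A, B, C]))
    (d1 d2 d3 : ℕ) (hd : d1 + d2 + d3 = m)
    (v : Fin m → ZMod 2)
    (hA : ∀ t : Fin m, t.val < d1 → A.mulVec v t = 0)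
    (hB : ∀ t : Fin m, t.val < d2 → B.mulVec v t = 0)
    (hC : ∀ t : Fin m, t.val < d3 → C.mulVec v t = 0) : v = 0 := by
  classical
  by_contra hv
  obtain ⟨l₀, hl₀, hdig⟩ := digitsVec_surj v
  have hl0ne : (0:ℕ) ≠ l₀ := by
    rintro rfl
    apply hv
    rw [← hdig]
    funext k
    simp [digitsVec]
  have h := hnet ![d1, d2, d3] (by simp [Fin.sum_univ_three]; omega) ![0, 0, 0]
    (by intro i; fin_cases i <;> simp <;> positivity)
  rw [digitalNet, Multiset.countP_map, ← Multiset.countP_eq_card_filter] at h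
  set p : ℕ → Prop := fun l => ∀ i : Fin 3,
      ((![(0:ℕ),0,0] i : ℝ) / 2 ^ (![d1,d2,d3] i) ≤ phiMap m ((![A,B,C] i).mulVec (digitsVec m l)) ∧
        phiMap m ((![A,B,C] i).mulVec (digitsVec m l)) < ((![(0:ℕ),0,0] i : ℝ) + 1) / 2 ^ (![d1,d2,d3] i)) with hp
  have hp0 : p 0 := by
    intro i
    have hz : digitsVec m 0 = (0 : Fin m → ZMod 2) := by funext k; simp [digitsVec]
    rw [hz, Matrix.mulVec_zero]
    have hphi0 : phiMap m (0 : Fin m → ZMod 2) = 0 := by simp [phiMap]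
    fin_cases i <;>
      simp [hphi0] <;> positivity
  have hkey : ∀ (M : Matrix (Fin m) (Fin m) (ZMod 2)) (dd : ℕ),
      (∀ t : Fin m, t.val < dd → M.mulVec v t = 0) →
      ((0:ℝ) / 2 ^ dd ≤ phiMap m (M.mulVec v) ∧ phiMap m (M.mulVec v) < ((0:ℝ) + 1) / 2 ^ dd) := by
    intro M dd hM
    refine ⟨by rw [zero_div]; exact phi_nonneg _, by rw [zero_add]; exact phi_lt _ _ hM⟩
  have hpl : p l₀ := by
    intro i
    fin_cases i
    · simpa [hdig] using hkey A d1 hA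
    · simpa [hdig] using hkey B d2 hB
    · simpa [hdig] using hkey C d3 hC
  have h2 := countP_ge_two (2^m) p hl0ne (by positivity) hl₀ hp0 hpl
  rw [pow_zero] at h
  have h3 : Multiset.countP p (Multiset.range (2^m)) = 1 :=
    (Multiset.countP_congr rfl (fun x _ => rfl)).trans h
  omega

section Rows

variable {m : ℕ} (A B C : Matrix (Fin m) (Fin m) (ZMod 2))

/-- The stacked family of rows: first `i` rows of `A`, then `m-i-j` rows of `B`,
then `j` rows of `C`. -/
def rowFam (i j : ℕ) : Fin m → (Fin m → ZMod 2) := fun t =>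
  if t.val < i then A t
  else if t.val < i + (m - i - j) then B ⟨t.val - i, lt_of_le_of_lt (Nat.sub_le _ _) t.isLt⟩
  else C ⟨t.val - (i + (m - i - j)), lt_of_le_of_lt (Nat.sub_le _ _) t.isLt⟩

lemma rowFam_li (hnet : IsNet 0 m 3 (digitalNet m 3 ![A, B, C]))
    {i j : ℕ} (hij : i + j ≤ m) :
    LinearIndependent (ZMod 2) (rowFam A B C i j) := by
  set M : Matrix (Fin m) (Fin m) (ZMod 2) := Matrix.of (rowFam A B C i j) with hM
  have hker : ∀ w : Fin m → ZMod 2, M.mulVec w = 0 → w = 0 := by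
    intro w hw
    apply net_inj A B C hnet i (m - i - j) j (by omega) w
    · intro t ht
      have h1 := congrFun hw ⟨t.val, t.isLt⟩
      have hrow : (fun k => M ⟨t.val, t.isLt⟩ k) = (fun k => A t k) := by
        funext k
        simp only [hM, Matrix.of_apply, rowFam, if_pos ht]
      calc A.mulVec w t = (fun k => M ⟨t.val, t.isLt⟩ k) ⬝ᵥ w := by rw [hrow]; rfl
        _ = 0 := h1
    · intro t ht
      have hlt : i + t.val < m := by omega
      have h1 := congrFun hw ⟨i + t.val, hlt⟩
      have hrow : (fun k => M ⟨i + t.val, hlt⟩ k) = (fun k => B t k) := by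
        funext k
        simp only [hM, Matrix.of_apply, rowFam]
        rw [if_neg (by omega), if_pos (by omega)]
        congr 1
        exact Fin.ext (by simp)
      calc B.mulVec w t = (fun k => M ⟨i + t.val, hlt⟩ k) ⬝ᵥ w := by rw [hrow]; rfl
        _ = 0 := h1
    · intro t ht
      have hlt : i + (m - i - j) + t.val < m := by omega
      have h1 := congrFun hw ⟨i + (m - i - j) + t.val, hlt⟩
      have hrow : (fun k => M ⟨i + (m - i - j) + t.val, hlt⟩ k) = (fun k => C t k) := by
        funext k
        simp only [hM, Matrix.of_apply, rowFam]
        rw [if_neg (by omega), if_neg (by omega)]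
        congr 1
        exact Fin.ext (by simp)
      calc C.mulVec w t = (fun k => M ⟨i + (m - i - j) + t.val, hlt⟩ k) ⬝ᵥ w := by rw [hrow]; rfl
        _ = 0 := h1
  have hinj : Function.Injective M.mulVec := by
    intro x y hxy
    have : M.mulVec (x - y) = 0 := by
      rw [Matrix.mulVec_sub, hxy, sub_self]
    have := hker _ this
    exact sub_eq_zero.1 this
  have hunit : IsUnit M := Matrix.mulVec_injective_iff_isUnit.1 hinj
  have := Matrix.linearIndependent_rows_iff_isUnit.2 hunit
  exact this

end Rows

section VsubLemmas

variable {m : ℕ} (A B C : Matrix (Fin m) (Fin m) (ZMod 2))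

lemma span_eq {i j : ℕ} (hij : i + j + 1 ≤ m) :
    Vsub A B C i j = Submodule.span (ZMod 2)
      (rowFam A B C i j '' {t : Fin m | t ≠ ⟨i + (m - i - j) - 1, by omega⟩}) := by
  unfold Vsub
  congr 1
  ext x
  constructor
  · rintro ((⟨r, hr, rfl⟩ | ⟨r, hr, rfl⟩) | ⟨r, hr, rfl⟩)
    · refine ⟨⟨r.val, r.isLt⟩, ?_, ?_⟩
      · simp only [Set.mem_setOf_eq, ne_eq, Fin.mk.injEq]
        omega
      · simp only [rowFam, if_pos hr]
    · refine ⟨⟨i + r.val, by omega⟩, ?_, ?_⟩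
      · simp only [Set.mem_setOf_eq, ne_eq, Fin.mk.injEq]
        omega
      · simp only [rowFam]
        rw [if_neg (by omega), if_pos (by omega)]
        exact congrArg B (Fin.val_injective (show i + r.val - i = r.val by omega))
    · refine ⟨⟨i + (m - i - j) + r.val, by omega⟩, ?_, ?_⟩
      · simp only [Set.mem_setOf_eq, ne_eq, Fin.mk.injEq]
        omega
      · simp only [rowFam]
        rw [if_neg (by omega), if_neg (by omega)]
        exact congrArg C (Fin.val_injective
          (show i + (m - i - j) + r.val - (i + (m - i - j)) = r.val by omega))
  · rintro ⟨t, ht, rfl⟩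
    simp only [Set.mem_setOf_eq, ne_eq] at ht
    have htv : t.val ≠ i + (m - i - j) - 1 := fun h => ht (Fin.ext h)
    simp only [rowFam]
    rcases Nat.lt_or_ge t.val i with h1 | h1
    · rw [if_pos h1]
      exact Or.inl (Or.inl ⟨t, h1, rfl⟩)
    · rcases Nat.lt_or_ge t.val (i + (m - i - j)) with h2 | h2
      · rw [if_neg (by omega), if_pos h2]
        exact Or.inl (Or.inr ⟨⟨t.val - i, lt_of_le_of_lt (Nat.sub_le _ _) t.isLt⟩,
          show t.val - i < m - i - j - 1 from by have := t.isLt; omega, rfl⟩)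
      · rw [if_neg (by omega), if_neg (by omega)]
        exact Or.inr ⟨⟨t.val - (i + (m - i - j)), lt_of_le_of_lt (Nat.sub_le _ _) t.isLt⟩,
          show t.val - (i + (m - i - j)) < j from by have := t.isLt; omega, rfl⟩

lemma finrank_Vsub (hnet : IsNet 0 m 3 (digitalNet m 3 ![A, B, C]))
    {i j : ℕ} (hij : i + j + 1 ≤ m) :
    Module.finrank (ZMod 2) ↥(Vsub A B C i j) = m - 1 := by
  rw [span_eq A B C hij, Set.image_eq_range]
  have hli := rowFam_li A B C hnet (i := i) (j := j) (by omega)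
  have hcomp : LinearIndependent (ZMod 2)
      (fun x : {t : Fin m | t ≠ ⟨i + (m - i - j) - 1, by omega⟩} => rowFam A B C i j ↑x) :=
    hli.comp Subtype.val Subtype.val_injective
  rw [finrank_span_eq_card hcomp]
  rw [show Fintype.card {t : Fin m | t ≠ ⟨i + (m - i - j) - 1, by omega⟩}
      = Fintype.card {t : Fin m // ¬ (t = ⟨i + (m - i - j) - 1, by omega⟩)} from rfl,
    Fintype.card_subtype_compl, Fintype.card_subtype_eq, Fintype.card_fin]

lemma Brow_not_mem_Vsub (hnet : IsNet 0 m 3 (digitalNet m 3 ![A, B, C]))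
    {i j : ℕ} (hij : i + j + 1 ≤ m) :
    B ⟨m - i - j - 1, by omega⟩ ∉ Vsub A B C i j := by
  rw [span_eq A B C hij]
  have hli := rowFam_li A B C hnet (i := i) (j := j) (by omega)
  have := hli.notMem_span_image
    (s := {t : Fin m | t ≠ ⟨i + (m - i - j) - 1, by omega⟩})
    (x := ⟨i + (m - i - j) - 1, by omega⟩) (by simp)
  have heq : rowFam A B C i j ⟨i + (m - i - j) - 1, by omega⟩
      = B ⟨m - i - j - 1, by omega⟩ := by
    simp only [rowFam]
    rw [if_neg (by omega), if_pos (by omega)]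
    exact congrArg B (Fin.val_injective (show i + (m - i - j) - 1 - i = m - i - j - 1 by omega))
  rw [← heq]
  exact this

end VsubLemmas

lemma inf_dim {m : ℕ} (hm : 1 ≤ m) (A B C : Matrix (Fin m) (Fin m) (ZMod 2))
    (hnet : IsNet 0 m 3 (digitalNet m 3 ![A, B, C])) (j : ℕ) :
    ∀ S : Finset ℕ, (∀ i ∈ S, i + j + 1 ≤ m) →
      Module.finrank (ZMod 2) ↥(S.inf fun i => Vsub A B C i j) = m - S.card := by
  intro S
  induction S using Finset.strongInduction with
  | _ S ih =>
    intro hS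
    rcases S.eq_empty_or_nonempty with rfl | hne
    · simp only [Finset.inf_empty, Finset.card_empty, Nat.sub_zero]
      show Module.finrank (ZMod 2) ↥(⊤ : Submodule (ZMod 2) (Fin m → ZMod 2)) = m
      rw [finrank_top]
      simp [Module.finrank_pi]
    · have hmax := S.max'_mem hne
      have hmaxle : S.max' hne + j + 1 ≤ m := hS _ hmax
      set S' := S.erase (S.max' hne) with hS'
      have hcard : S'.card = S.card - 1 := Finset.card_erase_of_mem hmax
      have hScard : S.card ≤ m := by
        calc S.card ≤ (Finset.range m).card := Finset.card_le_card (fun i hi =>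
          Finset.mem_range.2 (by have := hS i hi; omega))
        _ = m := Finset.card_range m
      have hcardpos : 0 < S.card := Finset.card_pos.2 hne
      have hins : S = insert (S.max' hne) S' := (Finset.insert_erase hmax).symm
      have hW : Module.finrank (ZMod 2) ↥(S'.inf fun i => Vsub A B C i j) = m - S'.card :=
        ih S' (Finset.erase_ssubset hmax) (fun i hi => hS i (Finset.mem_of_mem_erase hi))
      set V := Vsub A B C (S.max' hne) j with hV
      set W := S'.inf fun i => Vsub A B C i j with hWdef
      have hstep : S.inf (fun i => Vsub A B C i j) = V ⊓ W := by
        rw [hins, Finset.inf_insert]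
      set w : Fin m → ZMod 2 := B ⟨m - S.max' hne - j - 1, by omega⟩ with hw
      have hwW : w ∈ W := by
        rw [hWdef, Submodule.mem_finsetInf]
        intro i hi
        have hilt : i < S.max' hne :=
          lt_of_le_of_ne (S.le_max' i (Finset.mem_of_mem_erase hi)) (Finset.ne_of_mem_erase hi)
        apply Submodule.subset_span
        exact Or.inl (Or.inr ⟨⟨m - S.max' hne - j - 1, by omega⟩,
          show m - S.max' hne - j - 1 < m - i - j - 1 from by omega, rfl⟩)
      have hwV : w ∉ V := Brow_not_mem_Vsub A B C hnet hmaxle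
      have hVr : Module.finrank (ZMod 2) ↥V = m - 1 := finrank_Vsub A B C hnet hmaxle
      have hnotle : ¬ (W ≤ V) := fun hle => hwV (hle hwW)
      have hlt : V < V ⊔ W :=
        lt_of_le_of_ne le_sup_left (fun h => hnotle (h ▸ le_sup_right))
      have h1 : Module.finrank (ZMod 2) ↥(V ⊔ W) ≤ m := by
        have := Submodule.finrank_le (V ⊔ W)
        rwa [Module.finrank_pi, Fintype.card_fin] at this
      have h2 : m - 1 < Module.finrank (ZMod 2) ↥(V ⊔ W) :=
        hVr ▸ Submodule.finrank_lt_finrank_of_lt hlt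
      have hform := Submodule.finrank_sup_add_finrank_inf_eq V W
      rw [hstep]
      omega


theorem stmt13 (m : ℕ) (hm : 1 ≤ m) (A B C : Matrix (Fin m) (Fin m) (ZMod 2))
    (hnet : IsNet 0 m 3 (digitalNet m 3 ![A, B, C]))
    (j k : ℕ) (hj : j ≤ m - 1) (hk1 : 1 ≤ k) (hk2 : k ≤ m - j)
    (idx : Fin k → ℕ) (hmono : StrictMono idx) (hub : ∀ l, idx l ≤ m - 1 - j) :
    Module.finrank (ZMod 2) ↥(⨅ l : Fin k, Vsub A B C (idx l) j) = m - k := by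
  have hiInf : (⨅ l : Fin k, Vsub A B C (idx l) j)
      = (Finset.univ.image idx).inf (fun i => Vsub A B C i j) := by
    rw [Finset.inf_image]
    rw [Finset.inf_eq_iInf]
    simp
  rw [hiInf, inf_dim hm A B C hnet j _ (by
    intro i hi
    obtain ⟨l, _, rfl⟩ := Finset.mem_image.1 hi
    have := hub l
    omega)]
  rw [Finset.card_image_of_injective _ hmono.injective, Finset.card_univ, Fintype.card_fin]
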